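/- Let G(r_i, r_j) = (μ_i − μ_j)² / (2(σ_i²/r_i + σ_j²/r_j)) and x(r_i, r_j) = ((r_i/σ_i²)μ_i + (r_j/σ_j²)μ_j)/(r_i/σ_i² + r_j/σ_j²), with μ_i ≠ μ_j, σ_i, σ_j > 0, r_i, r_j > 0. Then ∂G/∂r_i (r_i, r_j) = (x(r_i, r_j) − μ_i)²/(2σ_i²) and ∂G/∂r_j (r_i, r_j) = (x(r_i, r_j) − μ_j)²/(2σ_j²); i.e., the partial derivatives of the rate function equal the individual rate functions Λ_i* and Λ_j* evaluated at the minimizing point. -/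

import Mathlib

theorem stmt_7 (μi μj σi σj ri rj : ℝ) (hμ : μi ≠ μj) (hσi : 0 < σi) (hσj : 0 < σj)
    (hri : 0 < ri) (hrj : 0 < rj) :
    let xstar : ℝ := ((ri / σi ^ 2) * μi + (rj / σj ^ 2) * μj) / (ri / σi ^ 2 + rj / σj ^ 2)
    HasDerivAt (fun r => (μi - μj) ^ 2 / (2 * (σi ^ 2 / r + σj ^ 2 / rj)))
      ((xstar - μi) ^ 2 / (2 * σi ^ 2)) ri ∧
    HasDerivAt (fun r => (μi - μj) ^ 2 / (2 * (σi ^ 2 / ri + σj ^ 2 / r)))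
      ((xstar - μj) ^ 2 / (2 * σj ^ 2)) rj := by
  intro xstar
  have hσi2 : (σi:ℝ)^2 ≠ 0 := by positivity
  have hσj2 : (σj:ℝ)^2 ≠ 0 := by positivity
  have hri' : ri ≠ 0 := hri.ne'
  have hrj' : rj ≠ 0 := hrj.ne'
  have hS : ri / σi ^ 2 + rj / σj ^ 2 ≠ 0 := by positivity
  constructor
  · have hden : HasDerivAt (fun r => 2 * (σi ^ 2 / r + σj ^ 2 / rj))
        (2 * (σi ^ 2 * (-(ri ^ 2)⁻¹))) ri := by
      have h1 : HasDerivAt (fun r : ℝ => σi ^ 2 / r) (σi ^ 2 * (-(ri ^ 2)⁻¹)) ri := by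
        simpa [div_eq_mul_inv] using (hasDerivAt_inv hri').const_mul (σi ^ 2)
      simpa using ((h1.add_const (σj ^ 2 / rj)).const_mul 2)
    have hdne : 2 * (σi ^ 2 / ri + σj ^ 2 / rj) ≠ 0 := by positivity
    have h : HasDerivAt (fun r => (μi - μj) ^ 2 / (2 * (σi ^ 2 / r + σj ^ 2 / rj))) _ ri := (hasDerivAt_const ri ((μi - μj) ^ 2)).div hden hdne
    convert h using 1
    show (xstar - μi) ^ 2 / (2 * σi ^ 2) = _
    show (((ri / σi ^ 2) * μi + (rj / σj ^ 2) * μj) / (ri / σi ^ 2 + rj / σj ^ 2) - μi) ^ 2 / (2 * σi ^ 2) = _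
    field_simp
    ring
  · have hden : HasDerivAt (fun r => 2 * (σi ^ 2 / ri + σj ^ 2 / r))
        (2 * (σj ^ 2 * (-(rj ^ 2)⁻¹))) rj := by
      have h1 : HasDerivAt (fun r : ℝ => σj ^ 2 / r) (σj ^ 2 * (-(rj ^ 2)⁻¹)) rj := by
        simpa [div_eq_mul_inv] using (hasDerivAt_inv hrj').const_mul (σj ^ 2)
      simpa using ((h1.const_add (σi ^ 2 / ri)).const_mul 2)
    have hdne : 2 * (σi ^ 2 / ri + σj ^ 2 / rj) ≠ 0 := by positivity
    have h : HasDerivAt (fun r => (μi - μj) ^ 2 / (2 * (σi ^ 2 / ri + σj ^ 2 / r))) _ rj := (hasDerivAt_const rj ((μi - μj) ^ 2)).div hden hdne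
    convert h using 1
    show (((ri / σi ^ 2) * μi + (rj / σj ^ 2) * μj) / (ri / σi ^ 2 + rj / σj ^ 2) - μj) ^ 2 / (2 * σj ^ 2) = _
    field_simp
    ring
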